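/- arXiv:1702.03313 — 5 statements merged into one kernel-verified Lean document; each statement's English description precedes it below -/
import Mathlib

section
/- Let A be an m×n real matrix, μ a fixed real number, C_j the sum of the entries of column j, D_j = max(C_j - μ, 0), and D = ∑_j D_j. If D_j ≥ D_k but a_{ij} ≤ a_{ik} for some row i, then interchanging the entries a_{ij} and a_{ik} does not decrease D. -/
open Finset

lemma max_swap_aux (x y d : ℝ) (hd : 0 ≤ d) (h : max x 0 ≥ max y 0) :
    max (x + d) 0 + max (y - d) 0 ≥ max x 0 + max y 0 := by
  simp only [max_def] at *
  split_ifs at * <;> linarith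

theorem stmt_1 {m n : ℕ} (A : Fin m → Fin n → ℝ) (μ : ℝ) (i : Fin m) (j k : Fin n)
    (hD : max ((∑ l, A l j) - μ) 0 ≥ max ((∑ l, A l k) - μ) 0)
    (ha : A i j ≤ A i k)
    (A' : Fin m → Fin n → ℝ)
    (hA' : A' = fun l c => if l = i ∧ c = j then A i k
                           else if l = i ∧ c = k then A i j
                           else A l c) :
    ∑ c, max ((∑ l, A' l c) - μ) 0 ≥ ∑ c, max ((∑ l, A l c) - μ) 0 := by
  subst hA'
  by_cases hjk : j = k
  · subst hjk
    have heq : ∀ l c, (if l = i ∧ c = j then A i j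
        else if l = i ∧ c = j then A i j else A l c) = A l c := by
      intro l c; split_ifs with h
      · rw [h.1, h.2]
      · rfl
    simp only [heq, ge_iff_le, le_refl]
  -- j ≠ k
  set d := A i k - A i j with hd
  have hd0 : 0 ≤ d := by simp [hd]; linarith
  have hcol : ∀ c : Fin n, c ≠ j → c ≠ k →
      (∑ l, (if l = i ∧ c = j then A i k else if l = i ∧ c = k then A i j else A l c))
        = ∑ l, A l c := by
    intro c hcj hck
    apply Finset.sum_congr rfl
    intro l _
    simp [hcj, hck]
  have hj : (∑ l, (if l = i ∧ (j:Fin n) = j then A i k else if l = i ∧ (j:Fin n) = k then A i j else A l j))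
      = (∑ l, A l j) + d := by
    have h1 : ∀ l : Fin m,
        (if l = i ∧ (j:Fin n) = j then A i k else if l = i ∧ (j:Fin n) = k then A i j else A l j)
          = A l j + (if l = i then d else 0) := by
      intro l
      by_cases hl : l = i <;> simp [hl, hjk, hd] <;> ring
    rw [Finset.sum_congr rfl (fun l _ => h1 l), Finset.sum_add_distrib,
      Finset.sum_ite_eq' Finset.univ i (fun _ => d)]
    simp
  have hk : (∑ l, (if l = i ∧ (k:Fin n) = j then A i k else if l = i ∧ (k:Fin n) = k then A i j else A l k))
      = (∑ l, A l k) - d := by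
    have h1 : ∀ l : Fin m,
        (if l = i ∧ (k:Fin n) = j then A i k else if l = i ∧ (k:Fin n) = k then A i j else A l k)
          = A l k - (if l = i then d else 0) := by
      intro l
      by_cases hl : l = i <;> simp [hl, Ne.symm hjk, hd] <;> ring
    rw [Finset.sum_congr rfl (fun l _ => h1 l), Finset.sum_sub_distrib,
      Finset.sum_ite_eq' Finset.univ i (fun _ => d)]
    simp
  set g : Fin n → ℝ := fun c =>
    max ((∑ l, (if l = i ∧ c = j then A i k else if l = i ∧ c = k then A i j else A l c)) - μ) 0
    with hg
  set f : Fin n → ℝ := fun c => max ((∑ l, A l c) - μ) 0 with hf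
  have hzero : ∀ c ∈ Finset.univ, c ∉ ({j, k} : Finset (Fin n)) → g c - f c = 0 := by
    intro c _ hc
    simp only [Finset.mem_insert, Finset.mem_singleton, not_or] at hc
    simp [hg, hf, hcol c hc.1 hc.2]
  have hsum : ∑ c, (g c - f c) = (g j - f j) + (g k - f k) := by
    rw [← Finset.sum_subset (Finset.subset_univ ({j, k} : Finset (Fin n)))
      (fun c hc hcn => hzero c hc hcn), Finset.sum_pair hjk]
  have hgj : g j = max (((∑ l, A l j) - μ) + d) 0 := by
    have h0 : g j = max ((∑ l, (if l = i ∧ (j:Fin n) = j then A i k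
        else if l = i ∧ (j:Fin n) = k then A i j else A l j)) - μ) 0 := rfl
    rw [h0, hj]
    congr 1
    ring
  have hgk : g k = max (((∑ l, A l k) - μ) - d) 0 := by
    have h0 : g k = max ((∑ l, (if l = i ∧ (k:Fin n) = j then A i k
        else if l = i ∧ (k:Fin n) = k then A i j else A l k)) - μ) 0 := rfl
    rw [h0, hk]
    congr 1
    ring
  have key := max_swap_aux ((∑ l, A l j) - μ) ((∑ l, A l k) - μ) d hd0 hD
  have hfj : f j = max ((∑ l, A l j) - μ) 0 := rfl
  have hfk : f k = max ((∑ l, A l k) - μ) 0 := rfl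
  have hsum2 : ∑ c, (g c - f c) = (∑ c, g c) - ∑ c, f c := by
    rw [Finset.sum_sub_distrib]
  have hfinal : (0:ℝ) ≤ (∑ c, g c) - ∑ c, f c := by
    rw [← hsum2, hsum, hgj, hgk, hfj, hfk]
    linarith
  linarith
end

section
/- For 0 ≤ r < 1, the normalized L¹ norm of P_r - 1 over the unit circle equals 2 - (4/π)·arccos(r); that is, (1/2π)∫_{-π}^{π} |P_r(θ) - 1| dθ = 2 - (4/π)·arccos r. -/
open Real Set intervalIntegral

namespace Stmt2Aux

variable {r : ℝ}

lemma denom_pos (hr0 : 0 ≤ r) (hr1 : r < 1) (θ : ℝ) :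
    0 < 1 - 2 * r * Real.cos θ + r ^ 2 := by
  nlinarith [Real.neg_one_le_cos θ, Real.cos_le_one θ, sq_nonneg (1 - r)]

lemma half_angle (θ : ℝ) :
    Real.cos (θ / 2) ^ 2 - Real.sin (θ / 2) ^ 2 = Real.cos θ := by
  have h := Real.cos_two_mul (θ / 2)
  have h2 := Real.sin_sq_add_cos_sq (θ / 2)
  have h3 : (2 : ℝ) * (θ / 2) = θ := by ring
  rw [h3] at h
  linarith

lemma key_denom (θ : ℝ) :
    (1 - r) ^ 2 * Real.cos (θ / 2) ^ 2 + (1 + r) ^ 2 * Real.sin (θ / 2) ^ 2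
      = 1 - 2 * r * Real.cos θ + r ^ 2 := by
  have h2 := Real.sin_sq_add_cos_sq (θ / 2)
  have hcs := half_angle θ
  linear_combination (1 + r ^ 2) * h2 - 2 * r * hcs

/-- Antiderivative of the Poisson kernel valid where `cos (θ/2) ≠ 0`. -/
lemma hasDerivAt_F (hr0 : 0 ≤ r) (hr1 : r < 1) {θ : ℝ} (hc : Real.cos (θ / 2) ≠ 0) :
    HasDerivAt (fun t => 2 * Real.arctan ((1 + r) / (1 - r) * Real.tan (t / 2)))
      ((1 - r ^ 2) / (1 - 2 * r * Real.cos θ + r ^ 2)) θ := by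
  have h1r : (1 : ℝ) - r ≠ 0 := by linarith
  have htan : HasDerivAt (fun t : ℝ => Real.tan (t / 2))
      (1 / Real.cos (θ / 2) ^ 2 * (1 / 2)) θ := by
    have := (Real.hasDerivAt_tan hc).comp θ ((hasDerivAt_id θ).div_const 2)
    exact this.congr_deriv (by simp)
  have h2 : HasDerivAt (fun t : ℝ => (1 + r) / (1 - r) * Real.tan (t / 2))
      ((1 + r) / (1 - r) * (1 / Real.cos (θ / 2) ^ 2 * (1 / 2))) θ := htan.const_mul _
  have h3 := ((Real.hasDerivAt_arctan ((1 + r) / (1 - r) * Real.tan (θ / 2))).comp θ h2).const_mul 2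
  refine h3.congr_deriv ?_
  have hkey := key_denom (r := r) θ
  have hpos : (1 - r) ^ 2 * Real.cos (θ / 2) ^ 2 + (1 + r) ^ 2 * Real.sin (θ / 2) ^ 2 ≠ 0 := by
    rw [hkey]; exact (denom_pos hr0 hr1 θ).ne'
  have hX : 1 + ((1 + r) / (1 - r) * Real.tan (θ / 2)) ^ 2 ≠ 0 := by positivity
  rw [Real.tan_eq_sin_div_cos] at *
  rw [← hkey]
  field_simp
  ring
  
/-- Antiderivative of the Poisson kernel valid where `sin (θ/2) ≠ 0`. -/
lemma hasDerivAt_G (hr0 : 0 ≤ r) (hr1 : r < 1) {θ : ℝ} (hs : Real.sin (θ / 2) ≠ 0) :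
    HasDerivAt (fun t => Real.pi - 2 * Real.arctan
        ((1 - r) / (1 + r) * (Real.cos (t / 2) / Real.sin (t / 2))))
      ((1 - r ^ 2) / (1 - 2 * r * Real.cos θ + r ^ 2)) θ := by
  have h1r : (1 : ℝ) + r ≠ 0 := by linarith
  have hcosd : HasDerivAt (fun t : ℝ => Real.cos (t / 2)) (-Real.sin (θ / 2) * (1 / 2)) θ := by
    refine ((Real.hasDerivAt_cos (θ / 2)).comp θ ((hasDerivAt_id θ).div_const 2)).congr_deriv ?_; simp
  have hsind : HasDerivAt (fun t : ℝ => Real.sin (t / 2)) (Real.cos (θ / 2) * (1 / 2)) θ := by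
    refine ((Real.hasDerivAt_sin (θ / 2)).comp θ ((hasDerivAt_id θ).div_const 2)).congr_deriv ?_; simp
  have hdiv := hcosd.div hsind hs
  have h2 := hdiv.const_mul ((1 - r) / (1 + r))
  have h3 := ((Real.hasDerivAt_arctan _).comp θ h2).const_mul 2
  have h4 := (hasDerivAt_const θ Real.pi).sub h3
  refine h4.congr_deriv ?_
  have hkey := key_denom (r := r) θ
  have hpos : (1 - r) ^ 2 * Real.cos (θ / 2) ^ 2 + (1 + r) ^ 2 * Real.sin (θ / 2) ^ 2 ≠ 0 := by
    rw [hkey]; exact (denom_pos hr0 hr1 θ).ne'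
  have hX : 1 + ((1 - r) / (1 + r) * (Real.cos (θ / 2) / Real.sin (θ / 2))) ^ 2 ≠ 0 := by
    positivity
  have hpyth := Real.sin_sq_add_cos_sq (θ / 2)
  have hnum : -Real.sin (θ / 2) * (1 / 2) * Real.sin (θ / 2)
      - Real.cos (θ / 2) * (Real.cos (θ / 2) * (1 / 2)) = -(1/2) := by
    linear_combination (-(1:ℝ)/2) * hpyth
  rw [hnum] at h4
  simp only [Pi.div_apply]
  rw [← hkey]
  field_simp
  linear_combination ((1 + 2*r - 2*r^3 - r^4) * Real.sin (θ/2)^2 +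
    (1 - 2*r + 2*r^3 - r^4) * Real.cos (θ/2)^2) * hpyth


lemma arctan_eval1 (hr0 : 0 ≤ r) (hr1 : r < 1) :
    Real.arctan ((1 + r) / (1 - r) * Real.tan (Real.arccos r / 2))
      = Real.pi / 2 - Real.arccos r / 2 := by
  set a := Real.arccos r with ha
  have hpi := Real.pi_pos
  have ha0 : 0 < a := Real.arccos_pos.2 hr1
  have ha2 : a ≤ Real.pi / 2 := Real.arccos_le_pi_div_two.2 hr0
  have hcosa : Real.cos a = r := Real.cos_arccos (by linarith) (by linarith)
  have hcpos : 0 < Real.cos (a / 2) :=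
    Real.cos_pos_of_mem_Ioo ⟨by linarith, by linarith⟩
  have hspos : 0 < Real.sin (a / 2) :=
    Real.sin_pos_of_pos_of_lt_pi (by linarith) (by linarith)
  have hha := half_angle a
  have hpyth := Real.sin_sq_add_cos_sq (a / 2)
  have h1r : (1 : ℝ) - r ≠ 0 := by linarith
  have heq : (1 + r) / (1 - r) * Real.tan (a / 2) = Real.tan (Real.pi / 2 - a / 2) := by
    rw [Real.tan_pi_div_two_sub, Real.tan_eq_sin_div_cos]
    rw [hcosa] at hha
    field_simp
    linear_combination -hha + r * hpyth
  rw [heq, Real.arctan_tan (by linarith) (by linarith)]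

lemma arctan_eval2 (hr0 : 0 ≤ r) (hr1 : r < 1) :
    Real.arctan ((1 - r) / (1 + r) *
        (Real.cos (Real.arccos r / 2) / Real.sin (Real.arccos r / 2)))
      = Real.arccos r / 2 := by
  set a := Real.arccos r with ha
  have hpi := Real.pi_pos
  have ha0 : 0 < a := Real.arccos_pos.2 hr1
  have ha2 : a ≤ Real.pi / 2 := Real.arccos_le_pi_div_two.2 hr0
  have hcosa : Real.cos a = r := Real.cos_arccos (by linarith) (by linarith)
  have hcpos : 0 < Real.cos (a / 2) :=
    Real.cos_pos_of_mem_Ioo ⟨by linarith, by linarith⟩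
  have hspos : 0 < Real.sin (a / 2) :=
    Real.sin_pos_of_pos_of_lt_pi (by linarith) (by linarith)
  have hha := half_angle a
  have hpyth := Real.sin_sq_add_cos_sq (a / 2)
  have h1r : (1 : ℝ) + r ≠ 0 := by linarith
  have heq : (1 - r) / (1 + r) * (Real.cos (a / 2) / Real.sin (a / 2))
      = Real.tan (a / 2) := by
    rw [Real.tan_eq_sin_div_cos]
    rw [hcosa] at hha
    field_simp
    linear_combination hha - r * hpyth
  rw [heq, Real.arctan_tan (by linarith) (by linarith)]

end Stmt2Aux

open Stmt2Aux

theorem stmt_2 (r : ℝ) (hr0 : 0 ≤ r) (hr1 : r < 1) :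
    (1 / (2 * Real.pi)) *
      ∫ θ in (-Real.pi)..Real.pi,
        |(1 - r ^ 2) / (1 - 2 * r * Real.cos θ + r ^ 2) - 1| =
    2 - (4 / Real.pi) * Real.arccos r := by
  have hpi := Real.pi_pos
  set a := Real.arccos r with ha
  have ha0 : 0 < a := Real.arccos_pos.2 hr1
  have ha2 : a ≤ Real.pi / 2 := Real.arccos_le_pi_div_two.2 hr0
  have hcosa : Real.cos a = r := Real.cos_arccos (by linarith) (by linarith)
  set f : ℝ → ℝ := fun θ => |(1 - r ^ 2) / (1 - 2 * r * Real.cos θ + r ^ 2) - 1| with hf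
  have hdne : ∀ θ : ℝ, (1 - 2 * r * Real.cos θ + r ^ 2) ≠ 0 :=
    fun θ => (denom_pos hr0 hr1 θ).ne'
  have hcont : Continuous f := by
    apply Continuous.abs
    apply Continuous.sub _ continuous_const
    exact continuous_const.div (by continuity) hdne
  have hint : ∀ b c : ℝ, IntervalIntegrable f MeasureTheory.volume b c :=
    fun b c => hcont.intervalIntegrable b c
  -- rewrite as P - 1 factorization
  have hfact : ∀ θ : ℝ, (1 - r ^ 2) / (1 - 2 * r * Real.cos θ + r ^ 2) - 1
      = 2 * r * (Real.cos θ - r) / (1 - 2 * r * Real.cos θ + r ^ 2) := by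
    intro θ
    rw [div_sub' (hdne θ), div_eq_div_iff (hdne θ) (hdne θ)]
    ring
  -- middle piece
  have hI1 : ∫ θ in (-a)..a, f θ = 2 * Real.pi - 4 * a := by
    have hcong : ∫ θ in (-a)..a, f θ
        = ∫ θ in (-a)..a, ((1 - r ^ 2) / (1 - 2 * r * Real.cos θ + r ^ 2) - 1) := by
      apply intervalIntegral.integral_congr
      intro θ hθ
      rw [Set.uIcc_of_le (by linarith)] at hθ
      have hcos : r ≤ Real.cos θ := by
        rw [← hcosa, ← Real.cos_abs θ]
        exact Real.cos_le_cos_of_nonneg_of_le_pi (abs_nonneg θ) (by linarith)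
          (abs_le.2 ⟨hθ.1, hθ.2⟩)
      have hnn : 0 ≤ (1 - r ^ 2) / (1 - 2 * r * Real.cos θ + r ^ 2) - 1 := by
        rw [hfact θ]
        apply div_nonneg _ (denom_pos hr0 hr1 θ).le
        have : 0 ≤ Real.cos θ - r := by linarith
        positivity
      exact abs_of_nonneg hnn
    rw [hcong]
    have hderiv : ∀ θ ∈ Set.uIcc (-a) a,
        HasDerivAt (fun t => 2 * Real.arctan ((1 + r) / (1 - r) * Real.tan (t / 2)) - t)
          ((1 - r ^ 2) / (1 - 2 * r * Real.cos θ + r ^ 2) - 1) θ := by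
      intro θ hθ
      rw [Set.uIcc_of_le (by linarith)] at hθ
      have hc : Real.cos (θ / 2) ≠ 0 := by
        refine (Real.cos_pos_of_mem_Ioo ⟨?_, ?_⟩).ne'
        · have := hθ.1; linarith
        · have := hθ.2; linarith
      exact (hasDerivAt_F hr0 hr1 hc).sub (hasDerivAt_id θ)
    have hint' : IntervalIntegrable
        (fun θ => (1 - r ^ 2) / (1 - 2 * r * Real.cos θ + r ^ 2) - 1)
        MeasureTheory.volume (-a) a := by
      apply Continuous.intervalIntegrable
      exact (continuous_const.div (by continuity) hdne).sub continuous_const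
    rw [intervalIntegral.integral_eq_sub_of_hasDerivAt hderiv hint']
    have he1 := arctan_eval1 (r := r) hr0 hr1
    rw [← ha] at he1
    have : Real.tan (-a / 2) = -Real.tan (a / 2) := by
      rw [show -a / 2 = -(a / 2) by ring, Real.tan_neg]
    rw [this]
    rw [show (1 + r) / (1 - r) * -Real.tan (a / 2)
        = -((1 + r) / (1 - r) * Real.tan (a / 2)) by ring, Real.arctan_neg, he1]
    ring
  -- right piece
  have hI2 : ∫ θ in a..Real.pi, f θ = Real.pi - 2 * a := by
    have hcong : ∫ θ in a..Real.pi, f θ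
        = ∫ θ in a..Real.pi, (1 - (1 - r ^ 2) / (1 - 2 * r * Real.cos θ + r ^ 2)) := by
      apply intervalIntegral.integral_congr
      intro θ hθ
      rw [Set.uIcc_of_le (by linarith)] at hθ
      have hcos : Real.cos θ ≤ r := by
        rw [← hcosa]
        exact Real.cos_le_cos_of_nonneg_of_le_pi (by linarith [hθ.1]) hθ.2 hθ.1
      have hnp : (1 - r ^ 2) / (1 - 2 * r * Real.cos θ + r ^ 2) - 1 ≤ 0 := by
        rw [hfact θ]
        apply div_nonpos_of_nonpos_of_nonneg _ (denom_pos hr0 hr1 θ).le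
        nlinarith
      rw [hf]
      simp only [abs_of_nonpos hnp]
      ring
    rw [hcong]
    have hderiv : ∀ θ ∈ Set.uIcc a Real.pi,
        HasDerivAt (fun t => t - (Real.pi - 2 * Real.arctan
            ((1 - r) / (1 + r) * (Real.cos (t / 2) / Real.sin (t / 2)))))
          (1 - (1 - r ^ 2) / (1 - 2 * r * Real.cos θ + r ^ 2)) θ := by
      intro θ hθ
      rw [Set.uIcc_of_le (by linarith)] at hθ
      have hs : Real.sin (θ / 2) ≠ 0 := by
        refine (Real.sin_pos_of_pos_of_lt_pi ?_ ?_).ne'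
        · have := hθ.1; linarith
        · have := hθ.2; linarith
      exact (hasDerivAt_id θ).sub (hasDerivAt_G hr0 hr1 hs)
    have hint' : IntervalIntegrable
        (fun θ => 1 - (1 - r ^ 2) / (1 - 2 * r * Real.cos θ + r ^ 2))
        MeasureTheory.volume a Real.pi := by
      apply Continuous.intervalIntegrable
      exact continuous_const.sub (continuous_const.div (by continuity) hdne)
    rw [intervalIntegral.integral_eq_sub_of_hasDerivAt hderiv hint']
    have he2 := arctan_eval2 (r := r) hr0 hr1
    rw [← ha] at he2
    rw [show Real.pi / 2 = Real.pi / 2 from rfl]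
    rw [Real.cos_pi_div_two]
    simp only [he2]
    norm_num
    ring
  -- left piece by symmetry
  have hI3 : ∫ θ in (-Real.pi)..(-a), f θ = Real.pi - 2 * a := by
    have := intervalIntegral.integral_comp_neg (a := a) (b := Real.pi) f
    rw [← this, ← hI2]
    apply intervalIntegral.integral_congr
    intro θ _
    simp [hf, Real.cos_neg]
  have hsplit : ∫ θ in (-Real.pi)..Real.pi, f θ
      = (∫ θ in (-Real.pi)..(-a), f θ) + (∫ θ in (-a)..a, f θ)
        + (∫ θ in a..Real.pi, f θ) := by
    rw [intervalIntegral.integral_add_adjacent_intervals (hint _ _) (hint _ _),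
      intervalIntegral.integral_add_adjacent_intervals (hint _ _) (hint _ _)]
  rw [hsplit, hI1, hI2, hI3]
  field_simp
  ring
end

section
/- For 0 ≤ r < 1, (1/2π)∫_{-arccos r}^{arccos r} P_r(θ) dθ = 1 - arccos(r)/π. -/
open Real intervalIntegral

theorem stmt_3 (r : ℝ) (hr0 : 0 ≤ r) (hr1 : r < 1) :
    (1 / (2 * Real.pi)) *
      ∫ θ in (-Real.arccos r)..(Real.arccos r),
        (1 - r ^ 2) / (1 - 2 * r * Real.cos θ + r ^ 2) =
    1 - Real.arccos r / Real.pi := by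
  set a := Real.arccos r with ha
  have ha0 : 0 < a := Real.arccos_pos.2 hr1
  have haπ : a ≤ π / 2 := Real.arccos_le_pi_div_two.2 hr0
  have hr1' : (0:ℝ) < 1 - r := by linarith
  have hr1'' : (0:ℝ) < 1 + r := by linarith
  set c : ℝ := (1 + r) / (1 - r) with hc
  have hcpos : 0 < c := div_pos hr1'' hr1'
  -- derivative
  have hderiv : ∀ θ ∈ Set.uIcc (-a) a,
      HasDerivAt (fun θ => 2 * Real.arctan (c * Real.tan (θ / 2)))
        ((1 - r ^ 2) / (1 - 2 * r * Real.cos θ + r ^ 2)) θ := by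
    intro θ hθ
    rw [Set.uIcc_of_le (by linarith)] at hθ
    obtain ⟨hθ1, hθ2⟩ := hθ
    have hcospos : 0 < Real.cos (θ / 2) := by
      apply Real.cos_pos_of_mem_Ioo
      constructor <;> [linarith [Real.pi_pos]; linarith [Real.pi_pos]]
    have hcos : Real.cos (θ / 2) ≠ 0 := ne_of_gt hcospos
    have h1 : HasDerivAt (fun θ : ℝ => θ / 2) (1 / 2) θ := by
      simpa using (hasDerivAt_id θ).div_const 2
    have h3 : HasDerivAt (fun θ : ℝ => Real.tan (θ / 2))
        (1 / Real.cos (θ / 2) ^ 2 * (1 / 2)) θ :=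
      HasDerivAt.comp θ (Real.hasDerivAt_tan hcos) h1
    have h4 := h3.const_mul c
    have h5 := (Real.hasDerivAt_arctan (c * Real.tan (θ / 2))).comp θ h4
    have h6 := h5.const_mul 2
    refine h6.congr_deriv (Eq.symm ?_)
    have hden : 0 < 1 - 2 * r * Real.cos θ + r ^ 2 := by
      nlinarith [Real.cos_le_one θ, Real.neg_one_le_cos θ]
    have hcosθ : Real.cos θ = 2 * Real.cos (θ / 2) ^ 2 - 1 := by
      rw [show θ = 2 * (θ / 2) by ring, Real.cos_two_mul]
      ring_nf
    rw [hcosθ] at hden ⊢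
    have hsc : Real.sin (θ / 2) ^ 2 = 1 - Real.cos (θ / 2) ^ 2 := by
      nlinarith [Real.sin_sq_add_cos_sq (θ / 2)]
    rw [Real.tan_eq_sin_div_cos, mul_pow, div_pow, div_pow, hsc]
    have hkey : 1 + (1 + r) ^ 2 / (1 - r) ^ 2 * ((1 - Real.cos (θ / 2) ^ 2) / Real.cos (θ / 2) ^ 2)
        = (1 - 2 * r * (2 * Real.cos (θ / 2) ^ 2 - 1) + r ^ 2)
          / ((1 - r) ^ 2 * Real.cos (θ / 2) ^ 2) := by
      field_simp
      ring
    rw [hkey, hc]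
    rw [div_eq_iff (ne_of_gt hden)]
    generalize hD : 1 - 2 * r * (2 * cos (θ / 2) ^ 2 - 1) + r ^ 2 = D at hden ⊢
    field_simp
    ring
  have hcont : Continuous (fun θ : ℝ => (1 - r ^ 2) / (1 - 2 * r * Real.cos θ + r ^ 2)) := by
    apply continuous_const.div
    · continuity
    · intro θ
      have h := Real.cos_le_one θ
      nlinarith
  have hint := intervalIntegral.integral_eq_sub_of_hasDerivAt hderiv
    (hcont.intervalIntegrable _ _)
  rw [hint]
  -- evaluate
  have hcosa : Real.cos a = r := Real.cos_arccos (by linarith) (by linarith)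
  have hta : 0 < Real.tan (a / 2) := by
    apply Real.tan_pos_of_pos_of_lt_pi_div_two <;> linarith [Real.pi_pos]
  have hca : Real.cos (a / 2) ^ 2 = (1 + r) / 2 := by
    have h := Real.cos_sq (a / 2)
    rw [show 2 * (a / 2) = a by ring, hcosa] at h
    linarith
  have hsa : Real.sin (a / 2) ^ 2 = (1 - r) / 2 := by
    nlinarith [Real.sin_sq_add_cos_sq (a / 2)]
  have htan2 : c * Real.tan (a / 2) ^ 2 = 1 := by
    rw [Real.tan_eq_sin_div_cos, div_pow, hsa, hca, hc]
    have : (1 + r) / 2 ≠ 0 := by positivity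
    field_simp
  have htan : c * Real.tan (a / 2) = Real.tan (π / 2 - a / 2) := by
    rw [Real.tan_pi_div_two_sub]
    field_simp
    linear_combination htan2
  have harctan : Real.arctan (c * Real.tan (a / 2)) = π / 2 - a / 2 := by
    rw [htan, Real.arctan_tan] <;> linarith [Real.pi_pos]
  have hneg : Real.arctan (c * Real.tan (-a / 2)) = -(π / 2 - a / 2) := by
    rw [show (-a) / 2 = -(a / 2) by ring, Real.tan_neg, mul_neg, Real.arctan_neg, harctan]
  rw [show (-a : ℝ) / 2 = -a / 2 by ring] at hneg
  simp only [hneg, harctan]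
  have hπ : Real.pi ≠ 0 := Real.pi_ne_zero
  field_simp
  ring
end

section
/- The norm of the operator B : f ↦ (f - f(0))/z on H^∞ of the unit disc equals 2; i.e., sup over f ∈ H^∞ with ‖f‖_∞ ≤ 1 of ‖f - f(0)‖_∞ equals 2. -/
open Metric

noncomputable def fa (a : ℝ) (z : ℂ) : ℂ := ((a:ℂ) - z) / (1 - (a:ℂ) * z)

lemma denom_ne {a : ℝ} (ha0 : 0 ≤ a) (ha1 : a < 1) {z : ℂ} (hz : ‖z‖ < 1) :
    (1 : ℂ) - (a:ℂ) * z ≠ 0 := by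
  intro h
  have h1 : (1:ℂ) = (a:ℂ) * z := sub_eq_zero.mp h
  have h2 : ‖(a:ℂ) * z‖ < 1 := by
    rw [norm_mul, Complex.norm_real, Real.norm_of_nonneg ha0]
    nlinarith [norm_nonneg z]
  rw [← h1] at h2; simp at h2

lemma fa_abs_le {a : ℝ} (ha0 : 0 ≤ a) (ha1 : a < 1) {z : ℂ} (hz : ‖z‖ < 1) :
    ‖fa a z‖ ≤ 1 := by
  rw [fa, norm_div]
  have hd : (1 : ℂ) - (a:ℂ) * z ≠ 0 := denom_ne ha0 ha1 hz
  rw [div_le_one (norm_pos_iff.mpr hd)]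
  have hn : Complex.normSq z < 1 := by rw [← Complex.sq_norm]; nlinarith [norm_nonneg z]
  have h1 : Complex.normSq ((a:ℂ) - z) ≤ Complex.normSq (1 - (a:ℂ) * z) := by
    simp only [Complex.normSq_apply, Complex.sub_re, Complex.sub_im, Complex.mul_re,
      Complex.mul_im, Complex.ofReal_re, Complex.ofReal_im, Complex.one_re, Complex.one_im] at *
    nlinarith [mul_nonneg (by nlinarith : (0:ℝ) ≤ 1 - a*a)
      (by nlinarith : (0:ℝ) ≤ 1 - z.re*z.re - z.im*z.im)]
  rw [Complex.norm_def, Complex.norm_def]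
  exact Real.sqrt_le_sqrt h1

lemma fa_diff {a : ℝ} (ha0 : 0 ≤ a) (ha1 : a < 1) :
    DifferentiableOn ℂ (fa a) (ball 0 1) := by
  intro z hz
  have hz' : ‖z‖ < 1 := by simpa using mem_ball_zero_iff.mp hz
  apply DifferentiableAt.differentiableWithinAt
  apply DifferentiableAt.div
  · fun_prop
  · fun_prop
  · exact denom_ne ha0 ha1 hz'

theorem stmt_9 :
    sSup {y : ℝ | ∃ f : ℂ → ℂ, DifferentiableOn ℂ f (ball 0 1) ∧
        (∀ z ∈ ball (0:ℂ) 1, ‖f z‖ ≤ 1) ∧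
        y = sSup ((fun z => ‖f z - f 0‖) '' ball 0 1)} = 2 := by
  set S := {y : ℝ | ∃ f : ℂ → ℂ, DifferentiableOn ℂ f (ball 0 1) ∧
        (∀ z ∈ ball (0:ℂ) 1, ‖f z‖ ≤ 1) ∧
        y = sSup ((fun z => ‖f z - f 0‖) '' ball 0 1)} with hS
  have h0ball : (0:ℂ) ∈ ball (0:ℂ) 1 := by simp
  have hS0 : (0:ℝ) ∈ S := by
    refine ⟨fun _ => 0, (by fun_prop), by simp, ?_⟩
    rw [Set.Nonempty.image_const ⟨0, h0ball⟩]
    simp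
  -- every element of S is ≤ 2
  have hle2 : ∀ y ∈ S, y ≤ 2 := by
    rintro y ⟨f, hdiff, hb, rfl⟩
    apply csSup_le ⟨_, Set.mem_image_of_mem _ h0ball⟩
    rintro b ⟨z, hz, rfl⟩
    calc ‖f z - f 0‖ ≤ ‖f z‖ + ‖f 0‖ := by
          simpa using norm_sub_le (f z) (f 0)
      _ ≤ 2 := by linarith [hb z hz, hb 0 h0ball]
  have hbdd : BddAbove S := ⟨2, hle2⟩
  apply le_antisymm (csSup_le ⟨0, hS0⟩ hle2)
  -- 2 ≤ sSup S
  apply le_of_forall_pos_le_add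
  intro ε hε
  set δ : ℝ := min (ε/8) (1/8) with hδdef
  have hδ0 : 0 < δ := by positivity
  have hδ8 : δ ≤ 1/8 := min_le_right _ _
  have hδε : 8 * δ ≤ ε := by
    have := min_le_left (ε/8) (1/8); rw [← hδdef] at this; linarith
  set a : ℝ := 1 - δ with ha
  set t : ℝ := 1 - δ^2 with ht
  have ha0 : 0 ≤ a := by rw [ha]; linarith
  have ha1 : a < 1 := by rw [ha]; linarith
  have ht0 : 0 < t := by rw [ht]; nlinarith
  have ht1 : t < 1 := by rw [ht]; nlinarith
  have htball : ((t:ℝ):ℂ) ∈ ball (0:ℂ) 1 := by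
    rw [mem_ball_zero_iff]
    simpa [Complex.norm_real, abs_of_nonneg ht0.le] using ht1
  set y : ℝ := sSup ((fun z => ‖fa a z - fa a 0‖) '' ball 0 1) with hy
  have hmem : y ∈ S := ⟨fa a, fa_diff ha0 ha1, fun z hz =>
    fa_abs_le ha0 ha1 (by simpa using mem_ball_zero_iff.mp hz), rfl⟩
  -- bound below y
  have himbdd : BddAbove ((fun z => ‖fa a z - fa a 0‖) '' ball (0:ℂ) 1) := by
    refine ⟨2, ?_⟩
    rintro b ⟨z, hz, rfl⟩
    have h1 := fa_abs_le ha0 ha1 (z := z) (by simpa using mem_ball_zero_iff.mp hz)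
    have h2 := fa_abs_le ha0 ha1 (z := 0) (by simp)
    calc ‖fa a z - fa a 0‖ ≤ ‖fa a z‖ + ‖fa a 0‖ := by
          simpa using norm_sub_le (fa a z) (fa a 0)
      _ ≤ 2 := by linarith
  have hyt : ‖fa a t - fa a 0‖ ≤ y :=
    le_csSup himbdd (Set.mem_image_of_mem _ htball)
  -- compute the value
  have hdenom : (0:ℝ) < 1 - a * t := by nlinarith
  have hval : fa a ((t:ℝ):ℂ) - fa a 0 = (((a - t)/(1 - a*t) - a : ℝ) : ℂ) := by
    have hd1 : (1 : ℂ) - (a:ℂ) * (t:ℂ) ≠ 0 := by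
      have : ((1 - a*t : ℝ):ℂ) ≠ 0 := by exact_mod_cast hdenom.ne'
      push_cast at this; exact this
    simp only [fa, Complex.ofReal_zero, mul_zero, sub_zero, div_one]
    push_cast
    field_simp
  have hcalc : ‖fa a t - fa a 0‖ = t * (1 - a^2) / (1 - a*t) := by
    rw [hval, Complex.norm_real, Real.norm_eq_abs]
    have heq : (a - t)/(1 - a*t) - a = -(t * (1 - a^2) / (1 - a*t)) := by
      field_simp; ring
    rw [heq, abs_neg, abs_of_nonneg (div_nonneg (mul_nonneg ht0.le (by nlinarith)) hdenom.le)]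
  have hbig : 2 - 8*δ ≤ t * (1 - a^2) / (1 - a*t) := by
    rw [le_div_iff₀ hdenom]
    simp only [ha, ht]
    nlinarith [mul_nonneg hδ0.le (by nlinarith : (0:ℝ) ≤ 5 - 7*δ^2), sq_nonneg δ]
  have : 2 - ε ≤ y := by
    rw [hcalc] at hyt
    linarith
  have hyS : y ≤ sSup S := le_csSup hbdd hmem
  linarith
end

section
/- For 0 < c ≤ π/2 and 0 < r < 1, arg((e^{2ic} - r²)/(1 - r²)) ≥ 2c. -/
theorem stmt_17 (c r : ℝ) (hc0 : 0 < c) (hc : c ≤ Real.pi / 2)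
    (hr0 : 0 < r) (hr1 : r < 1) :
    Complex.arg ((Complex.exp (2 * c * Complex.I) - (r:ℂ) ^ 2) / (1 - (r:ℂ) ^ 2)) ≥
      2 * c := by
  have h2c0 : 0 < 2 * c := by linarith
  have h2cpi : 2 * c ≤ Real.pi := by linarith
  have ht0 : (0:ℝ) < r ^ 2 := by positivity
  have ht1 : r ^ 2 < 1 := by nlinarith
  set z : ℂ := Complex.exp (2 * c * Complex.I) - (r:ℂ) ^ 2 with hzdef
  have hz : z = Complex.ofReal (Real.cos (2 * c) - r ^ 2)
      + Complex.ofReal (Real.sin (2 * c)) * Complex.I := by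
    rw [hzdef, show (2 * (c:ℂ) * Complex.I) = ((2 * c : ℝ) : ℂ) * Complex.I by
      push_cast; ring, Complex.exp_mul_I]
    push_cast [Complex.ofReal_cos, Complex.ofReal_sin]
    ring
  have hre : z.re = Real.cos (2 * c) - r ^ 2 := by
    rw [hz]
    simp only [Complex.add_re, Complex.ofReal_re, Complex.mul_re, Complex.ofReal_im,
      Complex.I_re, Complex.I_im]
    ring
  have him : z.im = Real.sin (2 * c) := by
    rw [hz]
    simp only [Complex.add_im, Complex.ofReal_im, Complex.mul_im, Complex.ofReal_re,
      Complex.I_re, Complex.I_im]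
    ring
  set s : ℝ := ‖z‖ with hsdef
  have hs2 : s ^ 2 = 1 - 2 * r ^ 2 * Real.cos (2 * c) + (r ^ 2) ^ 2 := by
    rw [hsdef, Complex.sq_norm, Complex.normSq_apply, hre, him]
    nlinarith [Real.sin_sq_add_cos_sq (2 * c)]
  have hcos1 : Real.cos (2 * c) ≤ 1 := Real.cos_le_one _
  have hcos2 : -1 ≤ Real.cos (2 * c) := Real.neg_one_le_cos _
  have hs_pos : 0 < s := by
    have h0 : 0 ≤ s := norm_nonneg z
    nlinarith
  have hz0 : z ≠ 0 := by
    intro h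
    rw [h] at hsdef
    simp [hsdef] at hs_pos
  have hsl : 1 - r ^ 2 ≤ s := by nlinarith
  have hsu : s ≤ 1 + r ^ 2 := by nlinarith
  have key : Real.cos (Complex.arg z) ≤ Real.cos (2 * c) := by
    rw [Complex.cos_arg hz0, hre, ← hsdef, div_le_iff₀ hs_pos]
    nlinarith [mul_nonneg (by linarith : (0:ℝ) ≤ 1 + Real.cos (2 * c))
        (by linarith : (0:ℝ) ≤ s - (1 - r ^ 2)),
      mul_nonneg (by linarith : (0:ℝ) ≤ 1 - Real.cos (2 * c))
        (by linarith : (0:ℝ) ≤ 1 + r ^ 2 - s)]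
  have harg0 : 0 ≤ Complex.arg z := by
    rw [Complex.arg_nonneg_iff, him]
    exact Real.sin_nonneg_of_nonneg_of_le_pi h2c0.le h2cpi
  have hargpi : Complex.arg z ≤ Real.pi := Complex.arg_le_pi z
  have hmain : 2 * c ≤ Complex.arg z := by
    by_contra h
    push_neg at h
    have := Real.strictAntiOn_cos ⟨harg0, hargpi⟩ ⟨h2c0.le, h2cpi⟩ h
    linarith
  have hd : (1 - (r:ℂ) ^ 2) = ((1 - r ^ 2 : ℝ) : ℂ) := by push_cast; ring
  rw [hd, div_eq_inv_mul, ← Complex.ofReal_inv,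
    Complex.arg_real_mul _ (inv_pos.mpr (by linarith))]
  exact hmain
end
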